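/- Let s be a positive integer and let B_1, …, B_s and W_1, …, W_s be random variables on a common probability space, each taking only finitely many real values, such that W_1, …, W_s are mutually independent and the tuple (W_1, …, W_s) is independent of the tuple (B_1, …, B_s). Define A_i = B_i + W_i for each i. Then the mutual information satisfies I((A_1, …, A_s); (B_1, …, B_s)) ≤ Σ_{i=1}^s I(A_i; B_i). -/

import Mathlib

open MeasureTheory ProbabilityTheory

noncomputable def probOf {Ω α : Type*} [MeasurableSpace Ω] (μ : Measure Ω) (X : Ω → α)
    (x : α) : ℝ :=
  (μ (X ⁻¹' {x})).toReal

noncomputable def dEntropy {Ω α : Type*} [MeasurableSpace Ω] (μ : Measure Ω) (X : Ω → α) : ℝ :=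
  ∑' x : α, -(probOf μ X x * Real.logb 2 (probOf μ X x))

noncomputable def dMI {Ω α β : Type*} [MeasurableSpace Ω] (μ : Measure Ω) (X : Ω → α)
    (Y : Ω → β) : ℝ :=
  dEntropy μ X + dEntropy μ Y - dEntropy μ (fun ω => (X ω, Y ω))

noncomputable def entTerm (p : ℝ) : ℝ := -(p * Real.logb 2 p)

section Aux

variable {Ω : Type*} [MeasurableSpace Ω] {μ : Measure Ω} [IsProbabilityMeasure μ]

lemma probOf_nonneg {Ω α : Type*} [MeasurableSpace Ω] (μ : Measure Ω) (X : Ω → α) (x : α) :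
    0 ≤ probOf μ X x :=
  ENNReal.toReal_nonneg

lemma probOf_empty {α : Type*} {X : Ω → α} {x : α} (hx : x ∉ Set.range X) :
    probOf μ X x = 0 := by
  have : X ⁻¹' {x} = ∅ := Set.preimage_singleton_eq_empty.mpr hx
  simp [probOf, this]

@[simp] lemma entTerm_zero : entTerm 0 = 0 := by simp [entTerm]

lemma dEntropy_eq_sum {α : Type*} {X : Ω → α} (S : Finset α) (hS : Set.range X ⊆ ↑S) :
    dEntropy μ X = ∑ x ∈ S, entTerm (probOf μ X x) := by
  refine tsum_eq_sum fun x hx => ?_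
  have : probOf μ X x = 0 := probOf_empty fun hr => hx (hS hr)
  simp [this, entTerm]

lemma sum_probOf {α : Type*} [MeasurableSpace α] [MeasurableSingletonClass α]
    {X : Ω → α} (hX : Measurable X) {S : Finset α} (hS : Set.range X ⊆ ↑S) :
    ∑ x ∈ S, probOf μ X x = 1 := by
  have hdisj : (↑S : Set α).PairwiseDisjoint (fun x => X ⁻¹' {x}) := by
    intro x _ y _ hxy
    simp only [Function.onFun]
    refine Set.disjoint_left.mpr fun {ω} h1 h2 => ?_
    simp only [Set.mem_preimage, Set.mem_singleton_iff] at h1 h2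
    exact hxy (h1 ▸ h2 ▸ rfl)
  have hmeas : ∀ x ∈ S, MeasurableSet (X ⁻¹' {x}) := fun x _ =>
    hX (measurableSet_singleton x)
  have hunion : ⋃ x ∈ S, X ⁻¹' {x} = Set.univ := by
    ext ω
    simp only [Set.mem_iUnion, Set.mem_univ, iff_true, Set.mem_preimage,
      Set.mem_singleton_iff]
    exact ⟨X ω, hS ⟨ω, rfl⟩, rfl⟩
  have hm := measure_biUnion_finset (μ := μ) hdisj hmeas
  rw [hunion, measure_univ] at hm
  calc ∑ x ∈ S, probOf μ X x
      = (∑ x ∈ S, μ (X ⁻¹' {x})).toReal :=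
        (ENNReal.toReal_sum fun a _ => measure_ne_top μ _).symm
    _ = 1 := by rw [← hm]; simp

lemma probOf_comp {α β : Type*} [DecidableEq β] [MeasurableSpace α] [MeasurableSingletonClass α]
    {X : Ω → α} (hX : Measurable X) {S : Finset α} (hS : Set.range X ⊆ ↑S)
    (f : α → β) (y : β) :
    probOf μ (fun ω => f (X ω)) y
      = ∑ x ∈ S.filter (fun x => f x = y), probOf μ X x := by
  have hdisj : (↑(S.filter (fun x => f x = y)) : Set α).PairwiseDisjoint
      (fun x => X ⁻¹' {x}) := by
    intro x _ y' _ hxy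
    simp only [Function.onFun]
    refine Set.disjoint_left.mpr fun {ω} h1 h2 => ?_
    simp only [Set.mem_preimage, Set.mem_singleton_iff] at h1 h2
    exact hxy (h1 ▸ h2 ▸ rfl)
  have hmeas : ∀ x ∈ S.filter (fun x => f x = y), MeasurableSet (X ⁻¹' {x}) := fun x _ =>
    hX (measurableSet_singleton x)
  have hset : (fun ω => f (X ω)) ⁻¹' {y} = ⋃ x ∈ S.filter (fun x => f x = y), X ⁻¹' {x} := by
    ext ω
    simp only [Set.mem_preimage, Set.mem_singleton_iff, Set.mem_iUnion, Finset.mem_filter]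
    constructor
    · intro h
      exact ⟨X ω, ⟨hS ⟨ω, rfl⟩, h⟩, rfl⟩
    · rintro ⟨x, ⟨-, hfx⟩, hx⟩
      rw [show X ω = x from hx]
      exact hfx
  rw [probOf, hset, measure_biUnion_finset hdisj hmeas,
    ENNReal.toReal_sum fun a _ => measure_ne_top μ _]
  rfl


lemma entTerm_mul {p q : ℝ} (hp : 0 ≤ p) (hq : 0 ≤ q) :
    entTerm (p * q) = q * entTerm p + p * entTerm q := by
  rcases eq_or_lt_of_le hp with h0 | h0
  · simp [entTerm, ← h0]
  rcases eq_or_lt_of_le hq with h1 | h1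
  · simp [entTerm, ← h1]
  simp only [entTerm, Real.logb_mul h0.ne' h1.ne']
  ring

lemma entTerm_prod {ι : Type*} [DecidableEq ι] (S : Finset ι) (p : ι → ℝ)
    (hp : ∀ i ∈ S, 0 ≤ p i) :
    entTerm (∏ i ∈ S, p i) = ∑ i ∈ S, (∏ j ∈ S.erase i, p j) * entTerm (p i) := by
  induction S using Finset.induction_on with
  | empty => simp [entTerm]
  | @insert a S ha ih =>
    have hpa : 0 ≤ p a := hp a (Finset.mem_insert_self a S)
    have hpS : ∀ i ∈ S, 0 ≤ p i := fun i hi => hp i (Finset.mem_insert_of_mem hi)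
    rw [Finset.prod_insert ha, entTerm_mul hpa (Finset.prod_nonneg hpS),
      Finset.sum_insert ha, ih hpS, Finset.mul_sum, Finset.erase_insert ha]
    congr 1
    refine Finset.sum_congr rfl fun i hi => ?_
    rw [Finset.erase_insert_of_ne (ne_of_mem_of_not_mem hi ha).symm,
      Finset.prod_insert (fun h => ha (Finset.mem_of_mem_erase h))]
    ring

lemma entTerm_sub_le {p q : ℝ} (hp : 0 ≤ p) (hq : 0 ≤ q) (hpq : p ≠ 0 → q ≠ 0) :
    entTerm p - p * (-Real.logb 2 q) ≤ (q - p) / Real.log 2 := by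
  have hlog2 : (0:ℝ) < Real.log 2 := Real.log_pos one_lt_two
  rcases eq_or_lt_of_le hp with h0 | h0
  · simp only [entTerm, ← h0]
    simpa using div_nonneg hq hlog2.le
  · have hq0 : 0 < q := lt_of_le_of_ne hq (Ne.symm (hpq h0.ne'))
    have hdiv : Real.log (q / p) = Real.log q - Real.log p := Real.log_div hq0.ne' h0.ne'
    have key : p * Real.log (q / p) ≤ q - p := by
      have h1 := Real.log_le_sub_one_of_pos (div_pos hq0 h0)
      have h2 : p * Real.log (q / p) ≤ p * (q / p - 1) := by nlinarith
      have h3 : p * (q / p - 1) = q - p := by field_simp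
      linarith
    have lhs_eq : entTerm p - p * (-Real.logb 2 q) = p * Real.log (q / p) / Real.log 2 := by
      simp only [entTerm, Real.logb, hdiv]
      ring
    rw [lhs_eq]
    gcongr

lemma gibbs {α : Type*} (S : Finset α) (p q : α → ℝ)
    (hp : ∀ a ∈ S, 0 ≤ p a) (hq : ∀ a ∈ S, 0 ≤ q a)
    (hpq : ∀ a ∈ S, p a ≠ 0 → q a ≠ 0)
    (hp1 : ∑ a ∈ S, p a = 1) (hq1 : ∑ a ∈ S, q a ≤ 1) :
    ∑ a ∈ S, entTerm (p a) ≤ ∑ a ∈ S, p a * (-Real.logb 2 (q a)) := by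
  have hlog2 : (0:ℝ) < Real.log 2 := Real.log_pos one_lt_two
  have key : ∀ a ∈ S, entTerm (p a) - p a * (-Real.logb 2 (q a)) ≤ (q a - p a) / Real.log 2 :=
    fun a ha => entTerm_sub_le (hp a ha) (hq a ha) (hpq a ha)
  have hsum := Finset.sum_le_sum key
  rw [Finset.sum_sub_distrib] at hsum
  have h2 : ∑ a ∈ S, (q a - p a) / Real.log 2 = (∑ a ∈ S, q a - 1) / Real.log 2 := by
    rw [← Finset.sum_div, Finset.sum_sub_distrib, hp1]
  have h3 : (∑ a ∈ S, q a - 1) / Real.log 2 ≤ 0 :=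
    div_nonpos_of_nonpos_of_nonneg (by linarith) hlog2.le
  linarith

lemma sum_mul_comp {α β : Type*} [DecidableEq β] (S : Finset α) (T : Finset β)
    (f : α → β) (hT : ∀ x ∈ S, f x ∈ T) (p : α → ℝ) (g : β → ℝ) (q' : β → ℝ)
    (hpf : ∀ y ∈ T, ∑ x ∈ S.filter (fun x => f x = y), p x = q' y) :
    ∑ x ∈ S, p x * g (f x) = ∑ y ∈ T, q' y * g y := by
  rw [← Finset.sum_fiberwise_of_maps_to hT (fun x => p x * g (f x))]
  refine Finset.sum_congr rfl fun y hy => ?_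
  rw [← hpf y hy, Finset.sum_mul]
  refine Finset.sum_congr rfl fun x hx => ?_
  rw [(Finset.mem_filter.mp hx).2]

-- entropy is invariant under injective post-composition
lemma dEntropy_comp_inj {α β : Type*} {X : Ω → α} (hXf : (Set.range X).Finite)
    {f : α → β} (hf : Function.Injective f) :
    dEntropy μ (fun ω => f (X ω)) = dEntropy μ X := by
  classical
  have hpre : ∀ x : α, probOf μ (fun ω => f (X ω)) (f x) = probOf μ X x := by
    intro x
    have : (fun ω => f (X ω)) ⁻¹' {f x} = X ⁻¹' {x} := by
      ext ω; simp [hf.eq_iff]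
    rw [probOf, this]; rfl
  have h1 : Set.range (fun ω => f (X ω)) ⊆ ↑(hXf.toFinset.image f) := by
    rintro y ⟨ω, rfl⟩
    simp only [Finset.coe_image, Set.mem_image, Finset.mem_coe, Set.Finite.mem_toFinset]
    exact ⟨X ω, ⟨ω, rfl⟩, rfl⟩
  rw [dEntropy_eq_sum (hXf.toFinset.image f) h1,
    dEntropy_eq_sum hXf.toFinset (by simp [Set.Finite.coe_toFinset]),
    Finset.sum_image (fun x _ y _ h => hf h)]
  exact Finset.sum_congr rfl fun x _ => by rw [hpre]

-- pair of independent variables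
lemma probOf_pair_indep {α β : Type*} [MeasurableSpace α] [MeasurableSpace β]
    [MeasurableSingletonClass α] [MeasurableSingletonClass β]
    {X : Ω → α} {Y : Ω → β} (h : IndepFun X Y μ) (x : α) (y : β) :
    probOf μ (fun ω => (X ω, Y ω)) (x, y) = probOf μ X x * probOf μ Y y := by
  have hset : (fun ω => (X ω, Y ω)) ⁻¹' {(x, y)} = X ⁻¹' {x} ∩ Y ⁻¹' {y} := by
    ext ω; simp [Prod.ext_iff]
  rw [probOf, hset, h.measure_inter_preimage_eq_mul {x} {y} (measurableSet_singleton x)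
    (measurableSet_singleton y), ENNReal.toReal_mul]
  rfl

lemma dEntropy_pair_indep {α β : Type*} [MeasurableSpace α] [MeasurableSpace β]
    [MeasurableSingletonClass α] [MeasurableSingletonClass β]
    {X : Ω → α} {Y : Ω → β} (hX : Measurable X) (hY : Measurable Y)
    (hXf : (Set.range X).Finite) (hYf : (Set.range Y).Finite)
    (h : IndepFun X Y μ) :
    dEntropy μ (fun ω => (X ω, Y ω)) = dEntropy μ X + dEntropy μ Y := by
  classical
  set SX := hXf.toFinset
  set SY := hYf.toFinset
  have hSX : Set.range X ⊆ ↑SX := by simp [SX, Set.Finite.coe_toFinset]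
  have hSY : Set.range Y ⊆ ↑SY := by simp [SY, Set.Finite.coe_toFinset]
  have hpair : Set.range (fun ω => (X ω, Y ω)) ⊆ ↑(SX ×ˢ SY) := by
    rintro z ⟨ω, rfl⟩
    simp only [Finset.coe_product, Set.mem_prod]
    exact ⟨hSX ⟨ω, rfl⟩, hSY ⟨ω, rfl⟩⟩
  rw [dEntropy_eq_sum (SX ×ˢ SY) hpair, Finset.sum_product]
  have : ∀ x ∈ SX, ∀ y ∈ SY, entTerm (probOf μ (fun ω => (X ω, Y ω)) (x, y))
      = probOf μ Y y * entTerm (probOf μ X x) + probOf μ X x * entTerm (probOf μ Y y) := by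
    intro x _ y _
    rw [probOf_pair_indep h x y, entTerm_mul (probOf_nonneg μ X x) (probOf_nonneg μ Y y)]
  calc ∑ x ∈ SX, ∑ y ∈ SY, entTerm (probOf μ (fun ω => (X ω, Y ω)) (x, y))
      = ∑ x ∈ SX, ∑ y ∈ SY, (probOf μ Y y * entTerm (probOf μ X x)
          + probOf μ X x * entTerm (probOf μ Y y)) :=
        Finset.sum_congr rfl fun x hx => Finset.sum_congr rfl fun y hy => this x hx y hy
    _ = (∑ y ∈ SY, probOf μ Y y) * (∑ x ∈ SX, entTerm (probOf μ X x))
          + (∑ x ∈ SX, probOf μ X x) * (∑ y ∈ SY, entTerm (probOf μ Y y)) := by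
        simp only [Finset.sum_add_distrib, ← Finset.sum_mul, ← Finset.mul_sum]
    _ = dEntropy μ X + dEntropy μ Y := by
        rw [sum_probOf hX hSX, sum_probOf hY hSY, dEntropy_eq_sum SX hSX,
          dEntropy_eq_sum SY hSY]
        ring

variable {s : ℕ} {A : Fin s → Ω → ℝ}

lemma measurable_tuple (hA : ∀ i, Measurable (A i)) :
    Measurable (fun ω => fun i => A i ω) :=
  measurable_pi_iff.mpr hA

lemma range_tuple_subset (hAfin : ∀ i, (Set.range (A i)).Finite) :
    Set.range (fun ω => fun i => A i ω)
      ⊆ ↑(Fintype.piFinset (fun i => (hAfin i).toFinset)) := by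
  rintro a ⟨ω, rfl⟩
  simp only [Finset.coe_sort_coe, Finset.mem_coe, Fintype.mem_piFinset,
    Set.Finite.mem_toFinset]
  exact fun i => ⟨ω, rfl⟩

-- factorization of the tuple pmf for mutually independent coordinates
lemma probOf_tuple_iIndep (hA : ∀ i, Measurable (A i))
    (hInd : iIndepFun A μ) (a : Fin s → ℝ) :
    probOf μ (fun ω => fun i => A i ω) a = ∏ i, probOf μ (A i) (a i) := by
  have hset : (fun ω => fun i => A i ω) ⁻¹' {a} = ⋂ i ∈ Finset.univ, A i ⁻¹' {a i} := by
    ext ω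
    simp [funext_iff]
  rw [probOf, hset, hInd.measure_inter_preimage_eq_mul Finset.univ
    (sets := fun i => {a i}) (fun i _ => measurableSet_singleton (a i)),
    ENNReal.toReal_prod]
  rfl

lemma dEntropy_tuple_iIndep (hA : ∀ i, Measurable (A i))
    (hAfin : ∀ i, (Set.range (A i)).Finite)
    (hInd : iIndepFun A μ) :
    dEntropy μ (fun ω => fun i => A i ω) = ∑ i, dEntropy μ (A i) := by
  classical
  set T : Fin s → Finset ℝ := fun i => (hAfin i).toFinset with hT
  set S := Fintype.piFinset T with hSdef
  have hS : Set.range (fun ω => fun i => A i ω) ⊆ ↑S := range_tuple_subset hAfin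
  have hTr : ∀ i, Set.range (A i) ⊆ ↑(T i) := by
    intro i; simp [hT, Set.Finite.coe_toFinset]
  rw [dEntropy_eq_sum S hS]
  have step1 : ∀ a ∈ S, entTerm (probOf μ (fun ω => fun i => A i ω) a)
      = ∑ i, (∏ j ∈ Finset.univ.erase i, probOf μ (A j) (a j))
          * entTerm (probOf μ (A i) (a i)) := by
    intro a _
    rw [probOf_tuple_iIndep hA hInd a]
    exact entTerm_prod Finset.univ _ (fun i _ => probOf_nonneg μ (A i) (a i))
  rw [Finset.sum_congr rfl step1, Finset.sum_comm]
  refine Finset.sum_congr rfl fun i _ => ?_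
  -- now: ∑ a ∈ S, (∏_{j ≠ i} p_j (a j)) * entTerm (p_i (a i)) = dEntropy μ (A i)
  set g : Fin s → ℝ → ℝ :=
    Function.update (fun j x => probOf μ (A j) x) i (fun x => entTerm (probOf μ (A i) x))
    with hg
  have hprod : ∀ a ∈ S, (∏ j ∈ Finset.univ.erase i, probOf μ (A j) (a j))
      * entTerm (probOf μ (A i) (a i)) = ∏ j, g j (a j) := by
    intro a _
    rw [← Finset.prod_erase_mul Finset.univ _ (Finset.mem_univ i)]
    congr 1
    · refine Finset.prod_congr rfl fun j hj => ?_
      rw [hg, Function.update_of_ne (Finset.ne_of_mem_erase hj)]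
    · rw [hg, Function.update_self]
  rw [Finset.sum_congr rfl hprod, hSdef, ← Finset.prod_univ_sum]
  rw [Finset.prod_eq_single i (fun j _ hj => ?_) (fun h => absurd (Finset.mem_univ i) h)]
  · rw [hg, Function.update_self, dEntropy_eq_sum (T i) (hTr i)]
  · rw [hg, Function.update_of_ne hj]
    exact sum_probOf (hA j) (hTr j)

-- subadditivity of entropy
lemma dEntropy_tuple_le (hA : ∀ i, Measurable (A i))
    (hAfin : ∀ i, (Set.range (A i)).Finite) :
    dEntropy μ (fun ω => fun i => A i ω) ≤ ∑ i, dEntropy μ (A i) := by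
  classical
  set T : Fin s → Finset ℝ := fun i => (hAfin i).toFinset with hT
  set S := Fintype.piFinset T with hSdef
  have hS : Set.range (fun ω => fun i => A i ω) ⊆ ↑S := range_tuple_subset hAfin
  have hTr : ∀ i, Set.range (A i) ⊆ ↑(T i) := by
    intro i; simp [hT, Set.Finite.coe_toFinset]
  have hAt : Measurable (fun ω => fun i => A i ω) := measurable_tuple hA
  set p : (Fin s → ℝ) → ℝ := fun a => probOf μ (fun ω => fun i => A i ω) a with hp
  set q : (Fin s → ℝ) → ℝ := fun a => ∏ i, probOf μ (A i) (a i) with hq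
  -- if the joint probability is nonzero, so is each marginal
  have hfac : ∀ a, p a ≠ 0 → ∀ i, probOf μ (A i) (a i) ≠ 0 := by
    intro a hpa i h0
    apply hpa
    have hsub : (fun ω => fun i => A i ω) ⁻¹' {a} ⊆ A i ⁻¹' {a i} := by
      intro ω hω
      simp only [Set.mem_preimage, Set.mem_singleton_iff] at hω ⊢
      rw [← hω]
    have h0' : μ (A i ⁻¹' {a i}) = 0 := by
      have := probOf_nonneg μ (A i) (a i)
      rw [probOf] at h0
      exact (ENNReal.toReal_eq_zero_iff _).mp h0 |>.resolve_right (measure_ne_top μ _)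
    have hz : μ ((fun ω => fun i => A i ω) ⁻¹' {a}) = 0 := measure_mono_null hsub h0'
    simp [hp, probOf, hz]
  have key : ∑ a ∈ S, entTerm (p a) ≤ ∑ a ∈ S, p a * (-Real.logb 2 (q a)) := by
    refine gibbs S p q (fun a _ => probOf_nonneg μ _ a)
      (fun a _ => Finset.prod_nonneg fun i _ => probOf_nonneg μ _ _)
      (fun a _ hpa => Finset.prod_ne_zero_iff.mpr fun i _ => hfac a hpa i) ?_ ?_
    · exact sum_probOf hAt hS
    · rw [hSdef, ← Finset.prod_univ_sum]
      have : ∀ j ∈ Finset.univ, ∑ x ∈ T j, probOf μ (A j) x = 1 :=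
        fun j _ => sum_probOf (hA j) (hTr j)
      rw [Finset.prod_congr rfl this]
      simp
  have step2 : ∀ a ∈ S, p a * (-Real.logb 2 (q a))
      = ∑ i, p a * (-Real.logb 2 (probOf μ (A i) (a i))) := by
    intro a _
    rcases eq_or_ne (p a) 0 with h | h
    · simp [h]
    · rw [hq]
      rw [Real.logb_prod Finset.univ _ (fun i _ => hfac a h i)]
      rw [mul_neg, ← neg_neg (∑ i : Fin s, p a * -Real.logb 2 (probOf μ (A i) (a i)))]
      congr 1
      rw [← Finset.sum_neg_distrib, Finset.mul_sum]
      exact Finset.sum_congr rfl fun i _ => by ring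
  have step3 : ∑ a ∈ S, p a * (-Real.logb 2 (q a))
      = ∑ i, ∑ a ∈ S, p a * (-Real.logb 2 (probOf μ (A i) (a i))) := by
    rw [Finset.sum_congr rfl step2, Finset.sum_comm]
  have step4 : ∀ i : Fin s, ∑ a ∈ S, p a * (-Real.logb 2 (probOf μ (A i) (a i)))
      = dEntropy μ (A i) := by
    intro i
    have hmaps : ∀ a ∈ S, a i ∈ T i := fun a ha => by
      exact Fintype.mem_piFinset.mp (hSdef ▸ ha) i
    have hfib : ∀ y ∈ T i, ∑ a ∈ S.filter (fun a => a i = y), p a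
        = probOf μ (A i) y := by
      intro y _
      rw [← probOf_comp hAt hS (fun a => a i) y]
    rw [sum_mul_comp S (T i) (fun a => a i) hmaps p
      (fun y => -Real.logb 2 (probOf μ (A i) y)) (fun y => probOf μ (A i) y) hfib,
      dEntropy_eq_sum (T i) (hTr i)]
    refine Finset.sum_congr rfl fun y _ => ?_
    rw [entTerm]
    ring
  calc dEntropy μ (fun ω => fun i => A i ω) = ∑ a ∈ S, entTerm (p a) := dEntropy_eq_sum S hS
    _ ≤ ∑ a ∈ S, p a * (-Real.logb 2 (q a)) := key
    _ = ∑ i, ∑ a ∈ S, p a * (-Real.logb 2 (probOf μ (A i) (a i))) := step3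
    _ = ∑ i, dEntropy μ (A i) := Finset.sum_congr rfl fun i _ => step4 i


lemma range_pair_finite {α β : Type*} {X : Ω → α} {Y : Ω → β}
    (hX : (Set.range X).Finite) (hY : (Set.range Y).Finite) :
    (Set.range (fun ω => (X ω, Y ω))).Finite := by
  refine (hX.prod hY).subset ?_
  rintro z ⟨ω, rfl⟩
  exact ⟨⟨ω, rfl⟩, ⟨ω, rfl⟩⟩

lemma range_add_finite {G : Type*} [Add G] {X Y : Ω → G}
    (hX : (Set.range X).Finite) (hY : (Set.range Y).Finite) :
    (Set.range (fun ω => X ω + Y ω)).Finite := by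
  refine (hX.image2 (· + ·) hY).subset ?_
  rintro x ⟨ω, rfl⟩
  exact Set.mem_image2_of_mem ⟨ω, rfl⟩ ⟨ω, rfl⟩

lemma dEntropy_pair_shift {G : Type*} [AddGroup G] {X Y : Ω → G}
    (hXf : (Set.range X).Finite) (hYf : (Set.range Y).Finite) :
    dEntropy μ (fun ω => (X ω + Y ω, Y ω)) = dEntropy μ (fun ω => (X ω, Y ω)) := by
  have hf : Function.Injective (fun z : G × G => (z.1 - z.2, z.2)) := by
    rintro ⟨a, b⟩ ⟨c, d⟩ h
    simp only [Prod.mk.injEq] at h ⊢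
    obtain ⟨h1, h2⟩ := h
    subst h2
    exact ⟨by
      have := h1
      rwa [sub_left_inj] at this, rfl⟩
  have hfin : (Set.range (fun ω => (X ω + Y ω, Y ω))).Finite :=
    range_pair_finite (range_add_finite hXf hYf) hYf
  have h := dEntropy_comp_inj (μ := μ) hfin hf
  have hfn : (fun ω => ((X ω + Y ω) - Y ω, Y ω)) = (fun ω => (X ω, Y ω)) := by
    funext ω
    rw [add_sub_cancel_right]
  calc dEntropy μ (fun ω => (X ω + Y ω, Y ω))
      = dEntropy μ (fun ω => ((X ω + Y ω) - Y ω, Y ω)) := h.symm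
    _ = dEntropy μ (fun ω => (X ω, Y ω)) := by rw [hfn]

end Aux

theorem mutualInfo_sum_le_of_indep_noise
    {Ω : Type*} [MeasurableSpace Ω] (μ : Measure Ω) [IsProbabilityMeasure μ]
    (s : ℕ) (hs : 0 < s) (B W : Fin s → Ω → ℝ)
    (hBmeas : ∀ i, Measurable (B i)) (hWmeas : ∀ i, Measurable (W i))
    (hBfin : ∀ i, (Set.range (B i)).Finite) (hWfin : ∀ i, (Set.range (W i)).Finite)
    (hWindep : iIndepFun W μ)
    (hindep : IndepFun (fun ω => fun i => W i ω) (fun ω => fun i => B i ω) μ) :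
    dMI μ (fun ω => fun i => B i ω + W i ω) (fun ω => fun i => B i ω) ≤
      ∑ i : Fin s, dMI μ (fun ω => B i ω + W i ω) (B i) := by
  classical
  have hAmeas : ∀ i, Measurable (fun ω => B i ω + W i ω) := fun i =>
    (hBmeas i).add (hWmeas i)
  have hAfin : ∀ i, (Set.range (fun ω => B i ω + W i ω)).Finite := fun i =>
    range_add_finite (hBfin i) (hWfin i)
  have hBtfin : (Set.range (fun ω => fun i => B i ω)).Finite := by
    refine (Set.Finite.pi (fun i => hBfin i)).subset ?_
    rintro x ⟨ω, rfl⟩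
    exact fun i _ => ⟨ω, rfl⟩
  have hWtfin : (Set.range (fun ω => fun i => W i ω)).Finite := by
    refine (Set.Finite.pi (fun i => hWfin i)).subset ?_
    rintro x ⟨ω, rfl⟩
    exact fun i _ => ⟨ω, rfl⟩
  have hBt : Measurable (fun ω => fun i => B i ω) := measurable_tuple hBmeas
  have hWt : Measurable (fun ω => fun i => W i ω) := measurable_tuple hWmeas
  -- joint pair entropy
  have hpairT : dEntropy μ (fun ω => ((fun i => B i ω + W i ω : Fin s → ℝ),
        (fun i => B i ω : Fin s → ℝ)))
      = ∑ i, dEntropy μ (W i) + dEntropy μ (fun ω => fun i => B i ω) := by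
    have hcomm : (fun ω => ((fun i => B i ω + W i ω : Fin s → ℝ),
          (fun i => B i ω : Fin s → ℝ)))
        = (fun ω => ((fun ω' => fun i => W i ω') ω + (fun ω' => fun i => B i ω') ω,
            (fun ω' => fun i => B i ω') ω)) := by
      funext ω
      refine Prod.ext ?_ rfl
      funext i
      simp [add_comm]
    rw [hcomm, dEntropy_pair_shift hWtfin hBtfin,
      dEntropy_pair_indep hWt hBt hWtfin hBtfin hindep,
      dEntropy_tuple_iIndep hWmeas hWfin hWindep]
  -- coordinatewise pair entropies
  have hpairI : ∀ i : Fin s, dEntropy μ (fun ω => (B i ω + W i ω, B i ω))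
      = dEntropy μ (W i) + dEntropy μ (B i) := by
    intro i
    have hWBi : IndepFun (W i) (B i) μ :=
      hindep.comp (measurable_pi_apply i) (measurable_pi_apply i)
    have hcomm : (fun ω => (B i ω + W i ω, B i ω))
        = (fun ω => (W i ω + B i ω, B i ω)) := by
      funext ω
      rw [add_comm]
    rw [hcomm, dEntropy_pair_shift (hWfin i) (hBfin i),
      dEntropy_pair_indep (hWmeas i) (hBmeas i) (hWfin i) (hBfin i) hWBi]
  -- subadditivity
  have hsub : dEntropy μ (fun ω => fun i => B i ω + W i ω)
      ≤ ∑ i, dEntropy μ (fun ω => B i ω + W i ω) :=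
    dEntropy_tuple_le (A := fun i ω => B i ω + W i ω) hAmeas hAfin
  simp only [dMI]
  have hW : dEntropy μ (fun ω => fun i => W i ω) = ∑ i, dEntropy μ (W i) :=
    dEntropy_tuple_iIndep hWmeas hWfin hWindep
  rw [hpairT]
  have hrhs : ∀ i : Fin s, (dEntropy μ fun ω => B i ω + W i ω) + dEntropy μ (B i)
      - dEntropy μ (fun ω => (B i ω + W i ω, B i ω))
      = (dEntropy μ fun ω => B i ω + W i ω) - dEntropy μ (W i) := by
    intro i
    rw [hpairI i]
    ring
  rw [Finset.sum_congr rfl (fun i _ => hrhs i), Finset.sum_sub_distrib]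
  have := hsub
  linarith
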